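/- Let N, n, m, q be natural numbers with n = m + q, q ≥ 1 and N > 2n − m. Let b ∈ ℝ^{q+1}, c ∈ ℝ^{m+1}, set a = c ⋆ b ∈ ℝ^{n+1}, and let ŷ ∈ ℝ^N satisfy T_{N−n}(a) ŷ = 0. Then the entire left factor annihilates the filtered Hankel matrix: T_{N−2n+m}(b) T_{N−n}(c) H_q(ŷ) = 0, where T_{N−n}(c) H_q(ŷ) ∈ ℝ^{(N−n)×(q+1)}. -/
import Mathlib


open Matrix

/-- Banded Toeplitz matrix `T_k(a)` of a coefficient vector `a = (a_n, …, a_1, a_0)`: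
entry `(i,j)` equals the coefficient `a_{n-(j-i)}` (vector component `j - i`, since
component `t` of the vector is the coefficient `a_{n-t}`) when `0 ≤ j - i ≤ n`, else `0`.
The number of columns is passed explicitly (intended: `N = k + n`). -/
def toep {R : Type*} [Semiring R] (k N n : ℕ) (a : Fin (n + 1) → R) :
    Matrix (Fin k) (Fin N) R :=
  Matrix.of fun i j =>
    if h : i.val ≤ j.val ∧ j.val - i.val ≤ n then a ⟨j.val - i.val, by omega⟩ else 0

/-- Hankel matrix `H_q(y) ∈ R^{(N-q) × (q+1)}` with entries `(H_q(y))_{i,j} = y_{i+j}` (0-based). -/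
def hank {R : Type*} [Semiring R] (N q : ℕ) (y : Fin N → R) :
    Matrix (Fin (N - q)) (Fin (q + 1)) R :=
  Matrix.of fun i j => y ⟨i.val + j.val, by have hi := i.isLt; have hj := j.isLt; omega⟩

/-- Convolution of coefficient vectors: `(c ⋆ b)_k = Σ_{i+j=k} c_i b_j`. -/
def convVec {R : Type*} [Semiring R] (m q : ℕ) (c : Fin (m + 1) → R) (b : Fin (q + 1) → R) :
    Fin (m + q + 1) → R :=
  fun k => ∑ i : Fin (m + 1), ∑ j : Fin (q + 1), if i.val + j.val = k.val then c i * b j else 0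

lemma toep_mul_apply {R : Type*} [Semiring R] {k N n P : ℕ} (hkN : k + n ≤ N)
    (a : Fin (n+1) → R) (M : Matrix (Fin N) (Fin P) R) (i : Fin k) (j : Fin P) :
    (toep k N n a * M) i j =
      ∑ t : Fin (n+1), a t * M ⟨i.val + t.val, by have := i.isLt; have := t.isLt; omega⟩ j := by
  have hi := i.isLt
  rw [Matrix.mul_apply]
  have hemb : Function.Injective
      (fun t : Fin (n+1) => (⟨i.val + t.val, by have := t.isLt; omega⟩ : Fin N)) := by
    intro s t h
    have : i.val + s.val = i.val + t.val := congrArg Fin.val h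
    exact Fin.ext (by omega)
  rw [← Finset.sum_subset (Finset.subset_univ
      ((Finset.univ : Finset (Fin (n+1))).map ⟨_, hemb⟩))]
  · rw [Finset.sum_map]
    apply Finset.sum_congr rfl
    intro t _
    simp only [Function.Embedding.coeFn_mk, toep, Matrix.of_apply]
    rw [dif_pos ⟨by omega, by have := t.isLt; omega⟩]
    congr 1
    exact congrArg a (Fin.ext (by simp))
  · intro u _ hu
    have hcond : ¬ (i.val ≤ u.val ∧ u.val - i.val ≤ n) := by
      intro ⟨h1, h2⟩
      apply hu
      simp only [Finset.mem_map, Finset.mem_univ, Function.Embedding.coeFn_mk, true_and]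
      exact ⟨⟨u.val - i.val, by omega⟩, Fin.ext (by simp; omega)⟩
    simp only [toep, Matrix.of_apply]
    rw [dif_neg hcond, zero_mul]

lemma toep_mulVec_apply {R : Type*} [Semiring R] {k N n : ℕ} (hkN : k + n ≤ N)
    (a : Fin (n+1) → R) (y : Fin N → R) (i : Fin k) :
    (toep k N n a *ᵥ y) i =
      ∑ t : Fin (n+1), a t * y ⟨i.val + t.val, by have := i.isLt; have := t.isLt; omega⟩ := by
  have : (toep k N n a *ᵥ y) i
      = (toep k N n a * Matrix.of (fun u (_ : Fin 1) => y u)) i 0 := by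
    simp [Matrix.mul_apply, Matrix.mulVec, dotProduct]
  rw [this, toep_mul_apply hkN]
  rfl

lemma conv_sum {R : Type*} [Semiring R] (m q : ℕ) (c : Fin (m+1) → R) (b : Fin (q+1) → R)
    (Y : ℕ → R) :
    ∑ t : Fin (m + q + 1), convVec m q c b t * Y t.val
      = ∑ p : Fin (m+1), ∑ r : Fin (q+1), c p * b r * Y (p.val + r.val) := by
  simp only [convVec, Finset.sum_mul, ite_mul, zero_mul]
  rw [Finset.sum_comm]
  apply Finset.sum_congr rfl
  intro p _
  rw [Finset.sum_comm]
  apply Finset.sum_congr rfl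
  intro r _
  rw [Finset.sum_eq_single (⟨p.val + r.val, by have := p.isLt; have := r.isLt; omega⟩ :
      Fin (m + q + 1))]
  · rw [if_pos rfl]
  · intro t _ ht
    rw [if_neg]
    intro h
    exact ht (Fin.ext h.symm)
  · intro h
    exact absurd (Finset.mem_univ _) h

/-- If `ŷ` is model-compliant, `T_{N-n}(a) ŷ = 0` with `a = c ⋆ b`, then the whole left
factor annihilates the filtered Hankel matrix: `T_{N-2n+m}(b) T_{N-n}(c) H_q(ŷ) = 0`. -/
theorem stmt12 (N m q : ℕ) (hq : 1 ≤ q) (hN : m + 2 * q < N)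
    (b : Fin (q + 1) → ℝ) (c : Fin (m + 1) → ℝ) (yhat : Fin N → ℝ)
    (hy : toep (N - (m + q)) N (m + q) (convVec m q c b) *ᵥ yhat = 0) :
    toep (N - (m + 2 * q)) (N - (m + q)) q b *
      (toep (N - (m + q)) (N - q) m c * hank N q yhat) = 0 := by
  ext i j
  have hi := i.isLt
  have hj := j.isLt
  have h1 : (N - (m + 2 * q)) + q ≤ N - (m + q) := by omega
  have h2 : (N - (m + q)) + m ≤ N - q := by omega
  have h3 : (N - (m + q)) + (m + q) ≤ N := by omega
  set z : ℕ → ℝ := fun u => if h : u < N then yhat ⟨u, h⟩ else 0 with hz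
  have hzv : ∀ (u : ℕ) (h : u < N), yhat ⟨u, h⟩ = z u := by
    intro u h; simp [hz, h]
  have hidx : i.val + j.val < N - (m + q) := by omega
  have key := congrFun hy ⟨i.val + j.val, hidx⟩
  rw [toep_mulVec_apply h3] at key
  simp only [Pi.zero_apply, hzv] at key
  rw [conv_sum m q c b (fun u => z (i.val + j.val + u))] at key
  rw [toep_mul_apply h1, Matrix.zero_apply]
  calc ∑ r : Fin (q+1), b r * (toep (N - (m + q)) (N - q) m c * hank N q yhat)
        ⟨i.val + r.val, by have := r.isLt; omega⟩ j
      = ∑ r : Fin (q+1), ∑ p : Fin (m+1),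
          b r * (c p * z (i.val + r.val + p.val + j.val)) := by
        apply Finset.sum_congr rfl
        intro r _
        rw [toep_mul_apply h2, Finset.mul_sum]
        apply Finset.sum_congr rfl
        intro p _
        simp only [hank, Matrix.of_apply]
        rw [hzv]
    _ = 0 := by
        rw [← key, Finset.sum_comm]
        apply Finset.sum_congr rfl
        intro p _
        apply Finset.sum_congr rfl
        intro r _
        rw [show i.val + r.val + p.val + j.val = i.val + j.val + (p.val + r.val) by omega]
        ring
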